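/- Let $f : \mathbb{R}^d \to \mathbb{C}$ be bounded and measurable, supported outside the cube $3Q$ where $Q$ is a dyadic cube with center $c_Q$. Let $k \in \mathbb{Z}$ with $2^{-k} \geq \ell(Q)$ (the side length of $Q$), and define $F_k(x) = M_k f(x) - E_k f(x) - (M_k f(c_Q) - E_k f(c_Q))$, where $M_k$ averages over the ball of radius $2^{-k}$ and $E_k$ is the dyadic conditional expectation at scale $2^{-k}$. Then for every $x \in Q$, $|F_k(x)| \leq C_d\, 2^k \ell(Q) \|f\|_\infty$. -/

import Mathlib

open MeasureTheory Metric

/-- The dyadic cube of side length `2^(-n)` containing `x`. -/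
def dyadicCubeOf (d : ℕ) (n : ℤ) (x : EuclideanSpace ℝ (Fin d)) :
    Set (EuclideanSpace ℝ (Fin d)) :=
  {y | ∀ i, ⌊(2:ℝ) ^ n * y i⌋ = ⌊(2:ℝ) ^ n * x i⌋}

/-- The dyadic conditional expectation at scale `2^(-n)` (for `ℂ`-valued functions). -/
noncomputable def dyadicCondExp (d : ℕ) (n : ℤ) (f : EuclideanSpace ℝ (Fin d) → ℂ)
    (x : EuclideanSpace ℝ (Fin d)) : ℂ :=
  ⨍ y in dyadicCubeOf d n x, f y

/-- The averaging operator over the ball of radius `2^(-k)`. -/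
noncomputable def ballAvg (d : ℕ) (k : ℤ) (f : EuclideanSpace ℝ (Fin d) → ℂ)
    (x : EuclideanSpace ℝ (Fin d)) : ℂ :=
  ⨍ y in Metric.ball x ((2:ℝ) ^ (-k)), f y

private lemma floor_aux (j : ℕ) (m : ℤ) (t : ℝ) (h1 : (m:ℝ)/2^j ≤ t)
    (h2 : t < ((m:ℝ)+1)/2^j) : ⌊t⌋ = m / 2^j := by
  have h2j : (0:ℝ) < 2^j := by positivity
  have h2j' : (0:ℤ) < 2^j := by positivity
  rw [Int.floor_eq_iff]
  constructor
  · refine le_trans ?_ h1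
    rw [le_div_iff₀ h2j]
    have := Int.ediv_mul_le m h2j'.ne'
    exact_mod_cast this
  · refine lt_of_lt_of_le h2 ?_
    rw [div_le_iff₀ h2j]
    have := Int.lt_ediv_add_one_mul_self m h2j'
    have : m + 1 ≤ (m / 2^j + 1) * 2^j := by omega
    exact_mod_cast this

private lemma coord_floor (k n : ℤ) (hkn : k ≤ n) (m : ℤ) (s : ℝ)
    (h1 : (2:ℝ)^(-n) * m ≤ s) (h2 : s < (2:ℝ)^(-n) * (m+1)) :
    ⌊(2:ℝ)^k * s⌋ = m / 2^((n-k).toNat) := by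
  set j := (n-k).toNat with hj
  have hpow : (2:ℝ)^k * (2:ℝ)^(-n) = ((2:ℝ)^j)⁻¹ := by
    rw [← zpow_natCast (2:ℝ) j, ← zpow_neg, ← zpow_add₀ (two_ne_zero : (2:ℝ) ≠ 0)]
    congr 1
    omega
  have hk : (0:ℝ) < (2:ℝ)^k := by positivity
  apply floor_aux j m
  · calc (m:ℝ)/2^j = (2:ℝ)^k * ((2:ℝ)^(-n) * m) := by
          rw [div_eq_mul_inv, ← hpow]; ring
    _ ≤ (2:ℝ)^k * s := by nlinarith
  · calc (2:ℝ)^k * s < (2:ℝ)^k * ((2:ℝ)^(-n) * (m+1)) := by nlinarith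
    _ = ((m:ℝ)+1)/2^j := by rw [div_eq_mul_inv, ← hpow]; push_cast; ring

private lemma avg_norm_le {d : ℕ} (f : EuclideanSpace ℝ (Fin d) → ℂ) {Mb : ℝ}
    (hf : Measurable f) (hMb : ∀ y, ‖f y‖ ≤ Mb) (z : EuclideanSpace ℝ (Fin d)) (r : ℝ) :
    ‖⨍ y in ball z r, f y‖ ≤ Mb := by
  have hMb0 : 0 ≤ Mb := le_trans (norm_nonneg _) (hMb 0)
  rw [setAverage_eq]
  rw [norm_smul, Real.norm_eq_abs, abs_of_nonneg (by positivity)]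
  have h1 : ‖∫ y in ball z r, f y‖ ≤ Mb * (volume (ball z r)).toReal :=
    norm_setIntegral_le_of_norm_le_const (measure_ball_lt_top) (fun y _ => hMb y)
  calc (volume (ball z r)).toReal⁻¹ * ‖∫ y in ball z r, f y‖
      ≤ (volume (ball z r)).toReal⁻¹ * (Mb * (volume (ball z r)).toReal) :=
        mul_le_mul_of_nonneg_left h1 (by positivity)
    _ ≤ Mb := by
        rcases eq_or_ne (volume (ball z r)).toReal 0 with h | h
        · simp [h, hMb0]
        · rw [mul_comm Mb, ← mul_assoc, inv_mul_cancel₀ h, one_mul]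

private lemma ballAvg_diff_le (d : ℕ) [NeZero d] (f : EuclideanSpace ℝ (Fin d) → ℂ)
    {Mb : ℝ} (hf : Measurable f) (hMb : ∀ y, ‖f y‖ ≤ Mb) {r δ : ℝ} (hr : 0 < r)
    (hδ0 : 0 ≤ δ) (hδr : δ ≤ r) (x c : EuclideanSpace ℝ (Fin d)) (hxc : dist x c ≤ δ) :
    ‖(⨍ y in ball x r, f y) - ⨍ y in ball c r, f y‖ ≤ 2 * d * Mb * (δ / r) := by
  have hMb0 : 0 ≤ Mb := le_trans (norm_nonneg _) (hMb 0)
  set μ := (volume : Measure (EuclideanSpace ℝ (Fin d)))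
  have hvol : ∀ (z : EuclideanSpace ℝ (Fin d)) (s : ℝ), 0 ≤ s →
      μ (ball z s) = ENNReal.ofReal (s ^ d) * μ (ball (0:EuclideanSpace ℝ (Fin d)) 1) := by
    intro z s hs
    rw [Measure.addHaar_ball μ z hs]
    simp [finrank_euclideanSpace_fin]
  set ω := (μ (ball (0:EuclideanSpace ℝ (Fin d)) 1)).toReal with hω
  have hω0 : 0 < ω :=
    ENNReal.toReal_pos (measure_ball_pos μ 0 one_pos).ne' (measure_ball_lt_top).ne
  have htoReal : ∀ (z : EuclideanSpace ℝ (Fin d)) (s : ℝ), 0 ≤ s →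
      (μ (ball z s)).toReal = s ^ d * ω := by
    intro z s hs
    rw [hvol z s hs, ENNReal.toReal_mul, ENNReal.toReal_ofReal (by positivity)]
  have hint : ∀ z : EuclideanSpace ℝ (Fin d), IntegrableOn f (ball z r) μ := fun z =>
    Measure.integrableOn_of_bounded (measure_ball_lt_top).ne hf.aestronglyMeasurable
      (Filter.Eventually.of_forall fun y => hMb y)
  have hμeq : (μ (ball c r)) = μ (ball x r) := by rw [hvol c r hr.le, hvol x r hr.le]
  set VT := (μ (ball x r)).toReal with hVT
  have hVTval : VT = r ^ d * ω := htoReal x r hr.le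
  have hVTpos : 0 < VT := by rw [hVTval]; positivity
  rw [setAverage_eq, setAverage_eq, measureReal_def, measureReal_def, hμeq, ← smul_sub, norm_smul, Real.norm_eq_abs,
    abs_of_nonneg (by positivity)]
  -- decompose the integrals
  have e1 : (∫ y in ball x r ∩ ball c r, f y ∂μ) + ∫ y in ball x r \ ball c r, f y ∂μ
      = ∫ y in ball x r, f y ∂μ := integral_inter_add_diff measurableSet_ball (hint x)
  have e2 : (∫ y in ball c r ∩ ball x r, f y ∂μ) + ∫ y in ball c r \ ball x r, f y ∂μ
      = ∫ y in ball c r, f y ∂μ := integral_inter_add_diff measurableSet_ball (hint c)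
  have ediff : (∫ y in ball x r, f y ∂μ) - ∫ y in ball c r, f y ∂μ
      = (∫ y in ball x r \ ball c r, f y ∂μ) - ∫ y in ball c r \ ball x r, f y ∂μ := by
    rw [← e1, ← e2, Set.inter_comm]; ring
  -- measure of the symmetric-difference pieces
  have hsmall : ∀ z w : EuclideanSpace ℝ (Fin d), dist z w ≤ δ →
      (μ (ball z r \ ball w r)).toReal ≤ r ^ d * ω - (r - δ) ^ d * ω := by
    intro z w hzw
    have hsub : ball z r \ ball w r ⊆ ball z r \ ball z (r - δ) := by
      intro y hy
      refine ⟨hy.1, fun hmem => hy.2 ?_⟩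
      have : dist y w ≤ dist y z + dist z w := dist_triangle y z w
      have : dist y w < r := by
        have := mem_ball.mp hmem
        calc dist y w ≤ dist y z + dist z w := dist_triangle y z w
          _ < (r - δ) + δ := by
              have h1 := mem_ball.mp hmem
              have h2 : dist y z < r - δ := h1
              exact add_lt_add_of_lt_of_le h2 hzw
          _ = r := by ring
      exact mem_ball.mpr this
    have hmono : μ (ball z r \ ball w r) ≤ μ (ball z r) - μ (ball z (r - δ)) := by
      rw [← measure_diff (ball_subset_ball (by linarith)) measurableSet_ball.nullMeasurableSet
        (measure_ball_lt_top).ne]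
      exact measure_mono hsub
    have h1 : (μ (ball z r \ ball w r)).toReal ≤ (μ (ball z r) - μ (ball z (r - δ))).toReal := by
      apply ENNReal.toReal_mono _ hmono
      exact (tsub_le_self.trans_lt measure_ball_lt_top).ne
    rw [ENNReal.toReal_sub_of_le (measure_mono (ball_subset_ball (by linarith)))
      (measure_ball_lt_top).ne, htoReal z r hr.le, htoReal z (r - δ) (by linarith)] at h1
    exact h1
  -- norm bounds
  have hn : ∀ z w : EuclideanSpace ℝ (Fin d), dist z w ≤ δ →
      ‖∫ y in ball z r \ ball w r, f y ∂μ‖ ≤ Mb * (r ^ d * ω - (r - δ) ^ d * ω) := by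
    intro z w hzw
    have hlt : μ (ball z r \ ball w r) < ⊤ :=
      (measure_mono Set.diff_subset).trans_lt measure_ball_lt_top
    calc ‖∫ y in ball z r \ ball w r, f y ∂μ‖
        ≤ Mb * (μ (ball z r \ ball w r)).toReal :=
          norm_setIntegral_le_of_norm_le_const hlt (fun y _ => hMb y)
      _ ≤ Mb * (r ^ d * ω - (r - δ) ^ d * ω) := by
          exact mul_le_mul_of_nonneg_left (hsmall z w hzw) hMb0
  have hxc' : dist c x ≤ δ := by rwa [dist_comm]
  have hnorm : ‖(∫ y in ball x r, f y ∂μ) - ∫ y in ball c r, f y ∂μ‖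
      ≤ 2 * Mb * (r ^ d * ω - (r - δ) ^ d * ω) := by
    rw [ediff]
    calc ‖(∫ y in ball x r \ ball c r, f y ∂μ) - ∫ y in ball c r \ ball x r, f y ∂μ‖
        ≤ ‖∫ y in ball x r \ ball c r, f y ∂μ‖ + ‖∫ y in ball c r \ ball x r, f y ∂μ‖ :=
          norm_sub_le _ _
      _ ≤ Mb * (r ^ d * ω - (r - δ) ^ d * ω) + Mb * (r ^ d * ω - (r - δ) ^ d * ω) :=
          add_le_add (hn x c hxc) (hn c x hxc')
      _ = 2 * Mb * (r ^ d * ω - (r - δ) ^ d * ω) := by ring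
  -- Bernoulli
  have hbern : r ^ d - (r - δ) ^ d ≤ (d : ℝ) * (δ / r) * r ^ d := by
    set t := δ / r with ht
    have ht0 : 0 ≤ t := by positivity
    have ht1 : t ≤ 1 := by rw [ht, div_le_one hr]; exact hδr
    have hb : 1 + (d : ℝ) * (-t) ≤ (1 + -t) ^ d := one_add_mul_le_pow (by linarith) d
    have hrd : (r - δ) = r * (1 + -t) := by
      rw [ht]
      field_simp
      ring
    have hrpow : (0:ℝ) < r ^ d := by positivity
    have : r ^ d * (1 + (d:ℝ) * (-t)) ≤ r ^ d * (1 + -t) ^ d :=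
      mul_le_mul_of_nonneg_left hb hrpow.le
    rw [hrd, mul_pow]
    nlinarith
  -- conclude
  rw [inv_mul_le_iff₀ hVTpos]
  calc ‖(∫ y in ball x r, f y ∂μ) - ∫ y in ball c r, f y ∂μ‖
      ≤ 2 * Mb * (r ^ d * ω - (r - δ) ^ d * ω) := hnorm
    _ = 2 * Mb * (r ^ d - (r - δ) ^ d) * ω := by ring
    _ ≤ 2 * Mb * ((d : ℝ) * (δ / r) * r ^ d) * ω := by
        have h2 : (0:ℝ) ≤ 2 * Mb * ω := by positivity
        nlinarith [mul_le_mul_of_nonneg_left hbern h2]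
    _ = VT * (2 * d * Mb * (δ / r)) := by rw [hVTval]; ring

/-- Let `Q` be the dyadic cube of side length `2^(-n)` determined by `m : Fin d → ℤ`,
with center `c_Q`, and let `f` be bounded, measurable and vanishing on `3Q`. Then for
`2^(-k) ≥ ℓ(Q)` (i.e. `k ≤ n`) and all `x ∈ Q`,
`|M_k f(x) - E_k f(x) - (M_k f(c_Q) - E_k f(c_Q))| ≤ C_d 2^k ℓ(Q) ‖f‖_∞`. -/
theorem smoothness_far_from_support (d : ℕ) :
    ∃ C : ℝ, 0 < C ∧ ∀ (n k : ℤ) (m : Fin d → ℤ) (c : EuclideanSpace ℝ (Fin d)),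
      (∀ i, c i = (2:ℝ) ^ (-n) * (m i + 1/2)) →
      k ≤ n →
      ∀ (f : EuclideanSpace ℝ (Fin d) → ℂ) (Mb : ℝ), Measurable f →
      (∀ y, ‖f y‖ ≤ Mb) →
      (∀ y : EuclideanSpace ℝ (Fin d),
        (∀ i, |y i - c i| ≤ 3 * (2:ℝ) ^ (-n) / 2) → f y = 0) →
      ∀ x : EuclideanSpace ℝ (Fin d),
        (∀ i, (2:ℝ) ^ (-n) * m i ≤ x i ∧ x i < (2:ℝ) ^ (-n) * (m i + 1)) →
        ‖ballAvg d k f x - dyadicCondExp d k f x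
            - (ballAvg d k f c - dyadicCondExp d k f c)‖
          ≤ C * (2:ℝ) ^ k * (2:ℝ) ^ (-n) * Mb := by
  refine ⟨(2 * d + 2) * Real.sqrt d + 1, by positivity, ?_⟩
  intro n k m c hc hkn f Mb hf hMb _hsupp x hx
  have hMb0 : 0 ≤ Mb := le_trans (norm_nonneg _) (hMb 0)
  have hpn : (0:ℝ) < (2:ℝ) ^ (-n) := by positivity
  have hpk : (0:ℝ) < (2:ℝ) ^ k := by positivity
  have hC : (d:ℝ) * Real.sqrt d ≤ (2 * d + 2) * Real.sqrt d + 1 := by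
    have : (0:ℝ) ≤ Real.sqrt d := Real.sqrt_nonneg d
    nlinarith
  have hC' : Real.sqrt d ≤ (2 * d + 2) * Real.sqrt d + 1 := by
    have : (0:ℝ) ≤ Real.sqrt d := Real.sqrt_nonneg d
    nlinarith
  -- the conditional expectations agree
  have hfl : ∀ i, ⌊(2:ℝ)^k * x i⌋ = ⌊(2:ℝ)^k * c i⌋ := by
    intro i
    rw [coord_floor k n hkn (m i) (x i) (hx i).1 (hx i).2,
        coord_floor k n hkn (m i) (c i) (by rw [hc i]; nlinarith) (by rw [hc i]; nlinarith)]
  have hcube : dyadicCubeOf d k x = dyadicCubeOf d k c := by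
    ext y
    simp only [dyadicCubeOf, Set.mem_setOf_eq]
    exact forall_congr' fun i => by rw [hfl i]
  have hE : dyadicCondExp d k f x = dyadicCondExp d k f c := by
    unfold dyadicCondExp; rw [hcube]
  have hsimp : ballAvg d k f x - dyadicCondExp d k f x
      - (ballAvg d k f c - dyadicCondExp d k f c) = ballAvg d k f x - ballAvg d k f c := by
    rw [hE]; ring
  rw [hsimp]
  -- distance bound
  have hdist : dist x c ≤ Real.sqrt d * ((2:ℝ) ^ (-n) / 2) := by
    have hcoord : ∀ i, dist (x i) (c i) ≤ (2:ℝ) ^ (-n) / 2 := by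
      intro i
      rw [Real.dist_eq, abs_le]
      have h1 := (hx i).1
      have h2 := (hx i).2
      rw [hc i]
      constructor <;> nlinarith
    rw [EuclideanSpace.dist_eq]
    have hsum : ∑ i, dist (x i) (c i) ^ 2 ≤ (d:ℝ) * ((2:ℝ) ^ (-n) / 2) ^ 2 := by
      calc ∑ i, dist (x i) (c i) ^ 2 ≤ ∑ _i : Fin d, ((2:ℝ) ^ (-n) / 2) ^ 2 :=
            Finset.sum_le_sum fun i _ => by
              have h1 := hcoord i
              have h0 : (0:ℝ) ≤ dist (x i) (c i) := dist_nonneg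
              nlinarith
        _ = (d:ℝ) * ((2:ℝ) ^ (-n) / 2) ^ 2 := by simp [Finset.sum_const, mul_comm]
    calc Real.sqrt (∑ i, dist (x i) (c i) ^ 2)
        ≤ Real.sqrt ((d:ℝ) * ((2:ℝ) ^ (-n) / 2) ^ 2) := Real.sqrt_le_sqrt hsum
      _ = Real.sqrt d * ((2:ℝ) ^ (-n) / 2) := by
          rw [Real.sqrt_mul (by positivity), Real.sqrt_sq (by positivity)]
  rcases Nat.eq_zero_or_pos d with hd0 | hd0
  · subst hd0
    have : x = c := Subsingleton.elim x c
    rw [this, sub_self, norm_zero]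
    positivity
  haveI : NeZero d := ⟨hd0.ne'⟩
  set δ := Real.sqrt d * ((2:ℝ) ^ (-n) / 2) with hδ
  have hδ0 : 0 ≤ δ := by positivity
  by_cases hcase : δ ≤ (2:ℝ) ^ (-k)
  · -- use the symmetric-difference estimate
    have := ballAvg_diff_le d f hf hMb (by positivity : (0:ℝ) < (2:ℝ)^(-k)) hδ0 hcase x c hdist
    unfold ballAvg
    refine le_trans this ?_
    have hinv : ((2:ℝ) ^ (-k))⁻¹ = (2:ℝ) ^ k := by
      rw [← zpow_neg]; norm_num
    have heq : 2 * (d:ℝ) * Mb * (δ / (2:ℝ) ^ (-k))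
        = ((d:ℝ) * Real.sqrt d) * (2:ℝ) ^ k * (2:ℝ) ^ (-n) * Mb := by
      rw [hδ, div_eq_mul_inv, hinv]; ring
    rw [heq]
    have h1 : (0:ℝ) ≤ (2:ℝ) ^ k * (2:ℝ) ^ (-n) * Mb := by positivity
    calc ((d:ℝ) * Real.sqrt d) * (2:ℝ) ^ k * (2:ℝ) ^ (-n) * Mb
        = ((d:ℝ) * Real.sqrt d) * ((2:ℝ) ^ k * (2:ℝ) ^ (-n) * Mb) := by ring
      _ ≤ ((2 * d + 2) * Real.sqrt d + 1) * ((2:ℝ) ^ k * (2:ℝ) ^ (-n) * Mb) :=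
          mul_le_mul_of_nonneg_right hC h1
      _ = ((2 * d + 2) * Real.sqrt d + 1) * (2:ℝ) ^ k * (2:ℝ) ^ (-n) * Mb := by ring
  · -- trivial bound
    push_neg at hcase
    have hb1 : ‖ballAvg d k f x‖ ≤ Mb := avg_norm_le f hf hMb x _
    have hb2 : ‖ballAvg d k f c‖ ≤ Mb := avg_norm_le f hf hMb c _
    have htriv : ‖ballAvg d k f x - ballAvg d k f c‖ ≤ 2 * Mb :=
      le_trans (norm_sub_le _ _) (by linarith)
    refine le_trans htriv ?_
    -- 2 ≤ √d * 2^k * 2^(-n)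
    have h2 : 2 < Real.sqrt d * (2:ℝ) ^ k * (2:ℝ) ^ (-n) := by
      have : (2:ℝ) ^ (-k) < Real.sqrt d * ((2:ℝ) ^ (-n) / 2) := hcase
      have hkk : (2:ℝ) ^ (-k) * (2:ℝ) ^ k = 1 := by
        rw [← zpow_add₀ (two_ne_zero : (2:ℝ) ≠ 0)]; norm_num
      nlinarith
    calc 2 * Mb ≤ Real.sqrt d * (2:ℝ) ^ k * (2:ℝ) ^ (-n) * Mb := by nlinarith
      _ = Real.sqrt d * ((2:ℝ) ^ k * (2:ℝ) ^ (-n) * Mb) := by ring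
      _ ≤ ((2 * d + 2) * Real.sqrt d + 1) * ((2:ℝ) ^ k * (2:ℝ) ^ (-n) * Mb) :=
          mul_le_mul_of_nonneg_right hC' (by positivity)
      _ = ((2 * d + 2) * Real.sqrt d + 1) * (2:ℝ) ^ k * (2:ℝ) ^ (-n) * Mb := by ring
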